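/- Let Λ be a local finite-dimensional ℂ-algebra with maximal ideal 𝔪, E a finite Λ-module, φ : E → E a Λ-linear endomorphism, and φ̄ : E/𝔪E → E/𝔪E the induced ℂ-linear endomorphism. Then the set of eigenvalues of φ (as a ℂ-linear endomorphism of E) equals the set of eigenvalues of φ̄. -/
import Mathlib


/-- The spectrum (set of `ℂ`-eigenvalues) of a `Λ`-linear endomorphism `φ` of a finite
`Λ`-module `E` equals the spectrum of the induced endomorphism `φ̄` of `E/𝔪E`. -/
theorem stmt4 {Λ E : Type*} [CommRing Λ] [Algebra ℂ Λ] [IsLocalRing Λ]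
    [FiniteDimensional ℂ Λ] [AddCommGroup E] [Module Λ E] [Module ℂ E]
    [IsScalarTower ℂ Λ E] [Module.Finite Λ E]
    (φ : E →ₗ[Λ] E)
    (φbar : (E ⧸ (IsLocalRing.maximalIdeal Λ • ⊤ : Submodule Λ E)) →ₗ[Λ]
      (E ⧸ (IsLocalRing.maximalIdeal Λ • ⊤ : Submodule Λ E)))
    (hbar : ∀ x : E, φbar (Submodule.Quotient.mk x) = Submodule.Quotient.mk (φ x)) :
    {ρ : ℂ | Module.End.HasEigenvalue (φ.restrictScalars ℂ) ρ} =
      {ρ : ℂ | Module.End.HasEigenvalue (φbar.restrictScalars ℂ) ρ} := by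
  have finE : Module.Finite ℂ E := Module.Finite.trans Λ E
  have finQ : Module.Finite ℂ (E ⧸ (IsLocalRing.maximalIdeal Λ • ⊤ : Submodule Λ E)) :=
    Module.Finite.trans Λ _
  ext ρ
  simp only [Set.mem_setOf_eq]
  set ψ : E →ₗ[Λ] E := φ - algebraMap ℂ Λ ρ • LinearMap.id with hψ
  set ψb : (E ⧸ (IsLocalRing.maximalIdeal Λ • ⊤ : Submodule Λ E)) →ₗ[Λ]
      (E ⧸ (IsLocalRing.maximalIdeal Λ • ⊤ : Submodule Λ E)) :=
    φbar - algebraMap ℂ Λ ρ • LinearMap.id with hψb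
  have hψfun : ∀ x : E, ψ x = φ x - ρ • x := by
    intro x
    rw [hψ, LinearMap.sub_apply, LinearMap.smul_apply, LinearMap.id_apply, algebraMap_smul]
  have hψbfun : ∀ y, ψb y = φbar y - ρ • y := by
    intro y
    rw [hψb, LinearMap.sub_apply, LinearMap.smul_apply, LinearMap.id_apply, algebraMap_smul]
  have hcomm : ∀ x : E, ψb (Submodule.Quotient.mk x) = Submodule.Quotient.mk (ψ x) := by
    intro x
    rw [hψbfun, hψfun, hbar, Submodule.Quotient.mk_sub, Submodule.Quotient.mk_smul]
  -- identify the ℂ-linear endomorphisms with restrictions of Λ-linear ones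
  have hre : (φ.restrictScalars ℂ - ρ • 1 : Module.End ℂ E) = ψ.restrictScalars ℂ := by
    apply LinearMap.ext
    intro x
    rw [LinearMap.sub_apply, LinearMap.smul_apply, Module.End.one_apply,
      LinearMap.coe_restrictScalars, LinearMap.coe_restrictScalars, hψfun]
  have hreb : (φbar.restrictScalars ℂ - ρ • 1 :
      Module.End ℂ (E ⧸ (IsLocalRing.maximalIdeal Λ • ⊤ : Submodule Λ E))) =
      ψb.restrictScalars ℂ := by
    apply LinearMap.ext
    intro x
    rw [LinearMap.sub_apply, LinearMap.smul_apply, Module.End.one_apply,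
      LinearMap.coe_restrictScalars, LinearMap.coe_restrictScalars, hψbfun]
  have e1 : Module.End.HasEigenvalue (φ.restrictScalars ℂ) ρ ↔ ¬ Function.Injective ψ := by
    rw [Module.End.hasEigenvalue_iff, Module.End.eigenspace_def, hre, Ne,
      LinearMap.ker_eq_bot]
    exact Iff.rfl
  have e2 : Module.End.HasEigenvalue (φbar.restrictScalars ℂ) ρ ↔
      ¬ Function.Injective ψb := by
    rw [Module.End.hasEigenvalue_iff, Module.End.eigenspace_def, hreb, Ne,
      LinearMap.ker_eq_bot]
    exact Iff.rfl
  -- injectivity ↔ surjectivity in finite dimensions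
  have i1 : Function.Injective ψ ↔ Function.Surjective ψ :=
    LinearMap.injective_iff_surjective (f := ψ.restrictScalars ℂ)
  have i2 : Function.Injective ψb ↔ Function.Surjective ψb :=
    LinearMap.injective_iff_surjective (f := ψb.restrictScalars ℂ)
  -- surjectivity transfers between E and E/𝔪E
  have s12 : Function.Surjective ψ ↔ Function.Surjective ψb := by
    constructor
    · intro h q
      obtain ⟨x, rfl⟩ := Submodule.mkQ_surjective _ q
      obtain ⟨x', hx'⟩ := h x
      exact ⟨Submodule.Quotient.mk x', by rw [Submodule.mkQ_apply, hcomm, hx']⟩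
    · intro h
      rw [← LinearMap.range_eq_top]
      have htop : (⊤ : Submodule Λ E) ≤ LinearMap.range ψ ⊔
          IsLocalRing.maximalIdeal Λ • (⊤ : Submodule Λ E) := by
        intro x _
        obtain ⟨q, hq⟩ := h (Submodule.Quotient.mk x)
        obtain ⟨x', rfl⟩ := Submodule.mkQ_surjective _ q
        rw [Submodule.mkQ_apply, hcomm] at hq
        have hmem : x - ψ x' ∈ (IsLocalRing.maximalIdeal Λ • ⊤ : Submodule Λ E) := by
          rw [← Submodule.Quotient.eq]
          exact hq.symm
        have hx : x = ψ x' + (x - ψ x') := by abel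
        rw [hx]
        exact Submodule.add_mem_sup (LinearMap.mem_range_self ψ x') hmem
      have hjac : IsLocalRing.maximalIdeal Λ ≤ Ideal.jacobson ⊥ := by
        rw [IsLocalRing.jacobson_eq_maximalIdeal ⊥ bot_ne_top]
      have hle := Submodule.le_of_le_smul_of_le_jacobson_bot
        (N := LinearMap.range ψ) (N' := (⊤ : Submodule Λ E))
        Module.Finite.fg_top hjac htop
      exact top_le_iff.mp hle
  rw [e1, e2, i1, i2, s12]
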